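/- Let q = 2^m with m odd, and suppose x₀ ∈ F_q is a solution of x³ - x - c = 0 for some c ∈ F_q. If c = 0 (equivalently x₀ ∈ {0,1}), the equation has exactly two solutions in F_q. Otherwise, the equation has exactly one solution if Tr(1/x₀) = Tr(1) + 1 and exactly three solutions if Tr(1/x₀) = Tr(1), where Tr is the absolute trace from F_q to F_2. -/

import Mathlib

open Finset
open scoped Classical

section Aux
variable {F : Type*} [Field F] [Fintype F] [Algebra (ZMod 2) F]

omit [Fintype F] in
lemma myCharP : CharP F 2 :=
  charP_of_injective_algebraMap (algebraMap (ZMod 2) F).injective 2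

lemma trace_sq' (x : F) :
    Algebra.trace (ZMod 2) F (x ^ 2) = Algebra.trace (ZMod 2) F x := by
  haveI := myCharP (F := F)
  let φ : F →ₐ[ZMod 2] F :=
    { toFun := (· ^ 2)
      map_one' := one_pow 2
      map_mul' := fun a b => mul_pow a b 2
      map_zero' := zero_pow (by norm_num)
      map_add' := fun a b => CharTwo.add_sq a b
      commutes' := fun r => by
        have h : ∀ r : ZMod 2, r ^ 2 = r := by decide
        show (algebraMap (ZMod 2) F) r ^ 2 = (algebraMap (ZMod 2) F) r
        rw [← map_pow, h] }
  have hb : Function.Bijective φ :=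
    Finite.injective_iff_bijective.mp (RingHom.injective (φ : F →+* F))
  exact Algebra.trace_eq_of_algEquiv (AlgEquiv.ofBijective φ hb) x

lemma artin_schreier (a : F) :
    Algebra.trace (ZMod 2) F a = 0 ↔ ∃ y : F, y ^ 2 + y = a := by
  haveI := myCharP (F := F)
  haveI : FiniteDimensional (ZMod 2) F := Module.Finite.of_finite
  have h2 : (2 : F) = 0 := by exact_mod_cast CharP.cast_eq_zero F 2
  set g : F →+ F := AddMonoidHom.mk' (fun x => x ^ 2 + x)
    (fun a b => by show (a + b) ^ 2 + (a + b) = (a ^ 2 + a) + (b ^ 2 + b); linear_combination CharTwo.add_sq a b) with hg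
  set t : F →+ ZMod 2 := (Algebra.trace (ZMod 2) F).toAddMonoidHom with ht
  have hrange_ker : (g.range : Set F) ⊆ (t.ker : Set F) := by
    rintro _ ⟨y, rfl⟩
    show g y ∈ t.ker
    rw [AddMonoidHom.mem_ker]
    show Algebra.trace (ZMod 2) F (y ^ 2 + y) = 0
    rw [map_add, trace_sq']
    exact CharTwo.add_self_eq_zero _
  have hcard1 : Nat.card F = Nat.card g.range * Nat.card g.ker := by
    rw [← Nat.card_congr (QuotientAddGroup.quotientKerEquivRange g).toEquiv]
    exact AddSubgroup.card_eq_card_quotient_mul_card_addSubgroup g.ker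
  have hcard2 : Nat.card F = Nat.card t.range * Nat.card t.ker := by
    rw [← Nat.card_congr (QuotientAddGroup.quotientKerEquivRange t).toEquiv]
    exact AddSubgroup.card_eq_card_quotient_mul_card_addSubgroup t.ker
  have hker_g : Nat.card g.ker = 2 := by
    have hset : (g.ker : Set F) = {0, 1} := by
      ext x
      simp only [SetLike.mem_coe, AddMonoidHom.mem_ker, Set.mem_insert_iff,
        Set.mem_singleton_iff]
      show x ^ 2 + x = 0 ↔ _
      constructor
      · intro h
        have hx : x * (x + 1) = 0 := by linear_combination h
        rcases mul_eq_zero.mp hx with h' | h'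
        · exact Or.inl h'
        · exact Or.inr (by linear_combination h' - h2)
      · rintro (rfl | rfl)
        · ring
        · linear_combination h2
    have : Nat.card g.ker = Set.ncard ((g.ker : Set F)) := Nat.card_coe_set_eq _
    rw [this, hset, Set.ncard_pair (zero_ne_one)]
  have hrange_t : Nat.card t.range = 2 := by
    have hne : Algebra.trace (ZMod 2) F ≠ 0 := Algebra.trace_ne_zero (ZMod 2) F
    have hb : ∃ b : F, t b ≠ 0 := by
      by_contra hall
      push_neg at hall
      exact hne (LinearMap.ext fun x => hall x)
    obtain ⟨b, hb⟩ := hb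
    have h1 : (1 : ZMod 2) ∈ t.range := by
      have : t b = 1 := by
        have : ∀ u : ZMod 2, u ≠ 0 → u = 1 := by decide
        exact this _ hb
      exact ⟨b, this⟩
    have : t.range = ⊤ := by
      rw [AddSubgroup.eq_top_iff']
      intro x
      have : ∀ u : ZMod 2, u = 0 ∨ u = 1 := by decide
      rcases this x with rfl | rfl
      · exact zero_mem _
      · exact h1
    rw [this]
    rw [show Nat.card (⊤ : AddSubgroup (ZMod 2)) = Nat.card (ZMod 2) from
      Nat.card_congr AddSubgroup.topEquiv.toEquiv]
    simp [Nat.card_eq_fintype_card]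
  have hcards : Nat.card g.range = Nat.card t.ker := by
    rw [hker_g] at hcard1
    rw [hrange_t] at hcard2
    omega
  have hseteq : (g.range : Set F) = (t.ker : Set F) := by
    apply Set.eq_of_subset_of_ncard_le hrange_ker
    rw [← Nat.card_coe_set_eq, ← Nat.card_coe_set_eq]
    exact hcards.ge
  constructor
  · intro h
    have : a ∈ (t.ker : Set F) := by
      show a ∈ t.ker
      rw [AddMonoidHom.mem_ker]
      exact h
    rw [← hseteq] at this
    obtain ⟨y, hy⟩ := this
    exact ⟨y, hy⟩
  · rintro ⟨y, rfl⟩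
    rw [map_add, trace_sq']
    exact CharTwo.add_self_eq_zero _
end Aux


theorem stmt9 {F : Type*} [Field F] [Fintype F] [Algebra (ZMod 2) F] (m : ℕ)
    (hm : Odd m) (hq : Fintype.card F = 2 ^ m)
    (c x₀ : F) (hx₀ : x₀ ^ 3 - x₀ - c = 0) :
    (c = 0 → (Finset.univ.filter (fun x : F => x ^ 3 - x - c = 0)).card = 2) ∧
    (c ≠ 0 →
      (Algebra.trace (ZMod 2) F x₀⁻¹ = Algebra.trace (ZMod 2) F 1 + 1 →
        (Finset.univ.filter (fun x : F => x ^ 3 - x - c = 0)).card = 1) ∧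
      (Algebra.trace (ZMod 2) F x₀⁻¹ = Algebra.trace (ZMod 2) F 1 →
        (Finset.univ.filter (fun x : F => x ^ 3 - x - c = 0)).card = 3)) := by
  haveI := myCharP (F := F)
  have h2 : (2 : F) = 0 := by exact_mod_cast CharP.cast_eq_zero F 2
  constructor
  · -- c = 0
    intro hc
    subst hc
    have hset : (Finset.univ.filter (fun x : F => x ^ 3 - x - 0 = 0)) = {0, 1} := by
      ext x
      simp only [mem_filter, mem_univ, true_and, mem_insert, mem_singleton]
      constructor
      · intro h
        have hx : x * (x - 1) ^ 2 = 0 := by linear_combination h + (x - x ^ 2) * h2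
        rcases mul_eq_zero.mp hx with h' | h'
        · exact Or.inl h'
        · exact Or.inr (sub_eq_zero.mp (pow_eq_zero_iff (by norm_num)|>.mp h'))
      · rintro (rfl | rfl) <;> norm_num
    rw [hset, Finset.card_pair zero_ne_one]
  · -- c ≠ 0
    intro hc
    have hx0 : x₀ ≠ 0 := by rintro rfl; exact hc (by linear_combination -hx₀)
    have hx1 : x₀ ≠ 1 := by rintro rfl; exact hc (by linear_combination -hx₀)
    have hinv : x₀ * x₀⁻¹ = 1 := mul_inv_cancel₀ hx0
    have factor : ∀ x : F, x ^ 3 - x - c = (x - x₀) * (x ^ 2 + x₀ * x + (x₀ ^ 2 + 1)) :=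
      fun x => by linear_combination hx₀ + (x₀ - x) * h2
    have root_iff : ∀ x : F,
        (x ^ 3 - x - c = 0) ↔ (x = x₀ ∨ x ^ 2 + x₀ * x + (x₀ ^ 2 + 1) = 0) := fun x => by
      rw [factor x, mul_eq_zero, sub_eq_zero]
    have Qx₀ : x₀ ^ 2 + x₀ * x₀ + (x₀ ^ 2 + 1) ≠ 0 := by
      intro h
      apply hx1
      have hsq : (x₀ + 1) ^ 2 = 0 := by linear_combination h + (x₀ - x₀ ^ 2) * h2
      have := pow_eq_zero_iff (n := 2) (by norm_num) |>.mp hsq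
      linear_combination this - h2
    have key : ∀ y : F, (x₀ * y) ^ 2 + x₀ * (x₀ * y) + (x₀ ^ 2 + 1) =
        x₀ ^ 2 * (y ^ 2 + y + (1 + (x₀⁻¹) ^ 2)) := fun y => by
      linear_combination (-(x₀ * x₀⁻¹ + 1)) * hinv
    have quad_iff : ∀ x : F, (x ^ 2 + x₀ * x + (x₀ ^ 2 + 1) = 0) ↔
        ((x₀⁻¹ * x) ^ 2 + (x₀⁻¹ * x) = 1 + (x₀⁻¹) ^ 2) := by
      intro x
      have hx : x₀ * (x₀⁻¹ * x) = x := by rw [mul_inv_cancel_left₀ hx0]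
      have hk := key (x₀⁻¹ * x)
      rw [hx] at hk
      constructor
      · intro h
        rw [h] at hk
        have := (mul_eq_zero.mp hk.symm).resolve_left (pow_ne_zero 2 hx0)
        linear_combination this + (-1 - (x₀⁻¹) ^ 2) * h2
      · intro h
        rw [hk, show (x₀⁻¹ * x) ^ 2 + (x₀⁻¹ * x) + (1 + (x₀⁻¹) ^ 2) = 0 by
          linear_combination h + (1 + (x₀⁻¹) ^ 2) * h2, mul_zero]
    have htr : Algebra.trace (ZMod 2) F (1 + (x₀⁻¹) ^ 2) =
        Algebra.trace (ZMod 2) F 1 + Algebra.trace (ZMod 2) F x₀⁻¹ := by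
      rw [map_add, trace_sq']
    constructor
    · -- one root
      intro hT
      have hTa : Algebra.trace (ZMod 2) F (1 + (x₀⁻¹) ^ 2) ≠ 0 := by
        rw [htr, hT]
        have : ∀ u : ZMod 2, u + (u + 1) ≠ 0 := by decide
        exact this _
      have noquad : ∀ x : F, x ^ 2 + x₀ * x + (x₀ ^ 2 + 1) ≠ 0 := by
        intro x h
        apply hTa
        rw [(artin_schreier _)]
        exact ⟨x₀⁻¹ * x, (quad_iff x).mp h⟩
      have hset : (Finset.univ.filter (fun x : F => x ^ 3 - x - c = 0)) = {x₀} := by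
        ext x
        simp only [mem_filter, mem_univ, true_and, mem_singleton]
        rw [root_iff x]
        constructor
        · rintro (h | h)
          · exact h
          · exact absurd h (noquad x)
        · exact Or.inl
      rw [hset, Finset.card_singleton]
    · -- three roots
      intro hT
      have hTa : Algebra.trace (ZMod 2) F (1 + (x₀⁻¹) ^ 2) = 0 := by
        rw [htr, hT]
        have : ∀ u : ZMod 2, u + u = 0 := by decide
        exact this _
      obtain ⟨y, hy⟩ := (artin_schreier _).mp hTa
      have hq1 : (x₀ * y) ^ 2 + x₀ * (x₀ * y) + (x₀ ^ 2 + 1) = 0 := by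
        have := (quad_iff (x₀ * y)).mpr
        rw [inv_mul_cancel_left₀ hx0] at this
        exact this hy
      have hq2 : (x₀ * y + x₀) ^ 2 + x₀ * (x₀ * y + x₀) + (x₀ ^ 2 + 1) = 0 := by
        have h' : (y + 1) ^ 2 + (y + 1) = 1 + (x₀⁻¹) ^ 2 := by
          linear_combination hy + (y + 1) * h2
        have := (quad_iff (x₀ * (y + 1))).mpr
        rw [inv_mul_cancel_left₀ hx0] at this
        have h3 := this h'
        linear_combination h3
      have d1 : x₀ ≠ x₀ * y := by
        intro h; rw [← h] at hq1; exact Qx₀ hq1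
      have d2 : x₀ ≠ x₀ * y + x₀ := by
        intro h; rw [← h] at hq2; exact Qx₀ hq2
      have d3 : x₀ * y ≠ x₀ * y + x₀ := by
        intro h; exact hx0 (by linear_combination -h)
      have hset : (Finset.univ.filter (fun x : F => x ^ 3 - x - c = 0)) =
          {x₀, x₀ * y, x₀ * y + x₀} := by
        ext x
        simp only [mem_filter, mem_univ, true_and, mem_insert, mem_singleton]
        rw [root_iff x]
        constructor
        · rintro (h | h)
          · exact Or.inl h
          · have hy' := (quad_iff x).mp h
            set y' := x₀⁻¹ * x with hy'def
            have hxx : x = x₀ * y' := by rw [hy'def, mul_inv_cancel_left₀ hx0]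
            have hprod : (y' + y) * (y' + y + 1) = 0 := by
              linear_combination hy' - hy + (y' * y + y ^ 2 + y) * h2
            rcases mul_eq_zero.mp hprod with h' | h'
            · refine Or.inr (Or.inl ?_)
              have : y' = y := by linear_combination h' - y * h2
              rw [hxx, this]
            · refine Or.inr (Or.inr ?_)
              have : y' = y + 1 := by linear_combination h' + (-y - 1) * h2
              rw [hxx, this]; ring
        · rintro (rfl | rfl | rfl)
          · exact Or.inl rfl
          · exact Or.inr hq1
          · exact Or.inr hq2
      rw [hset]
      rw [Finset.card_insert_of_notMem (by simp [d1, d2]),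
        Finset.card_insert_of_notMem (by simp [d3]), Finset.card_singleton]
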